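/- Let r ≥ 2 and let x₁,…,x_r ∈ ℂ be linearly independent over ℚ; set x = (x₁,…,x_r) ∈ ℂ^r. Then for every i with 0 ≤ i ≤ r−1, the family of vectors π(e_{j₁}) ∧ ⋯ ∧ π(e_{jᵢ}) ∈ ⋀ⁱ_ℂ (ℂ^r/ℂ·x), indexed by the subsets {j₁ < ⋯ < jᵢ} of {1,…,r} of cardinality i, is linearly independent over ℚ. -/

import Mathlib

namespace EGG14

/-- Any complex vector space is a `ℚ`-vector space by restriction of scalars. -/
noncomputable local instance ratModule (M : Type*) [AddCommGroup M] [Module ℂ M] :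
    Module ℚ M :=
  Module.compHom M (algebraMap ℚ ℂ)

lemma ratSMul_def {M : Type*} [AddCommGroup M] [Module ℂ M] (q : ℚ) (m : M) :
    q • m = (q : ℂ) • m := by
  show algebraMap ℚ ℂ q • m = (q : ℂ) • m
  rw [eq_ratCast]

/-- Multiplying on the left by `ι x` kills perturbations by multiples of `x`. -/
lemma iotaMul_congr {R M : Type*} [CommRing R] [AddCommGroup M] [Module R M]
    (x : M) (n : ℕ) (v w : Fin n → M) (h : ∀ k, ∃ c : R, v k = w k + c • x) :
    ExteriorAlgebra.ι R x * ExteriorAlgebra.ιMulti R n v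
      = ExteriorAlgebra.ι R x * ExteriorAlgebra.ιMulti R n w := by
  induction n with
  | zero => rfl
  | succ n ih =>
    have hswap : ∀ y : M, ExteriorAlgebra.ι R x * ExteriorAlgebra.ι R y
        = -(ExteriorAlgebra.ι R y * ExteriorAlgebra.ι R x) := by
      intro y
      exact eq_neg_of_add_eq_zero_left (ExteriorAlgebra.ι_add_mul_swap x y)
    obtain ⟨c, hc⟩ := h 0
    rw [ExteriorAlgebra.ιMulti_succ_apply, ExteriorAlgebra.ιMulti_succ_apply]
    have hst : ∀ u : Fin n → M,
        ExteriorAlgebra.ι R x * (ExteriorAlgebra.ι R (w 0) * ExteriorAlgebra.ιMulti R n u)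
        = -(ExteriorAlgebra.ι R (w 0) * (ExteriorAlgebra.ι R x * ExteriorAlgebra.ιMulti R n u)) := by
      intro u
      rw [← mul_assoc, hswap (w 0), neg_mul, mul_assoc]
    have h1 : ExteriorAlgebra.ι R x *
        (ExteriorAlgebra.ι R (v 0) * ExteriorAlgebra.ιMulti R n (Matrix.vecTail v))
        = ExteriorAlgebra.ι R x *
        (ExteriorAlgebra.ι R (w 0) * ExteriorAlgebra.ιMulti R n (Matrix.vecTail v)) := by
      rw [hc, map_add, map_smul, add_mul, mul_add, smul_mul_assoc, mul_smul_comm,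
        ← mul_assoc (ExteriorAlgebra.ι R x) (ExteriorAlgebra.ι R x),
        ExteriorAlgebra.ι_sq_zero, zero_mul, smul_zero, add_zero]
    rw [h1, hst, hst, ih (Matrix.vecTail v) (Matrix.vecTail w) (fun k => h k.succ)]

/-- A 0-1 matrix whose rows are distinct indicator rows hitting all columns has
nonzero determinant. -/
lemma det_indicator_ne_zero {n : ℕ} {α : Type*} [DecidableEq α] (φ τ : Fin n → α)
    (hφ : Function.Injective φ) (hτ : Function.Injective τ)
    (hsub : ∀ k, ∃ l, φ l = τ k) :
    (Matrix.of fun k l => if φ l = τ k then (1 : ℚ) else 0).det ≠ 0 := by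
  obtain ⟨ρ, hρ⟩ : ∃ ρ : Fin n → Fin n, ∀ k, φ (ρ k) = τ k :=
    ⟨fun k => Classical.choose (hsub k), fun k => Classical.choose_spec (hsub k)⟩
  have hρinj : Function.Injective ρ := by
    intro a b hab
    apply hτ
    rw [← hρ a, ← hρ b, hab]
  let e : Equiv.Perm (Fin n) := Equiv.ofBijective ρ (Finite.injective_iff_bijective.mp hρinj)
  have hmat : (Matrix.of fun k l => if φ l = τ k then (1 : ℚ) else 0)
      = Equiv.Perm.permMatrix ℚ e := by
    ext k l
    have hiff : (φ l = τ k) ↔ (e k = l) := by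
      constructor
      · intro h
        have : φ l = φ (ρ k) := by rw [h, hρ k]
        exact (hφ this).symm
      · intro h
        have h' : ρ k = l := h
        rw [← h', hρ k]
    show (if φ l = τ k then (1 : ℚ) else 0) = (Equiv.toPEquiv e).toMatrix k l
    rw [PEquiv.toMatrix_apply, Equiv.toPEquiv_apply]
    simp only [Option.mem_def, Option.some.injEq]
    exact if_congr hiff rfl rfl
  rw [hmat, Matrix.det_permutation]
  rcases Int.units_eq_one_or (Equiv.Perm.sign e) with h | h <;> rw [h] <;> norm_num

open ExteriorAlgebra in
/-- The main computation: the coefficient functional applied to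
`ι x * ⋀ π(e_{σ k})` expands rationally in the coordinates of `x`. -/
lemma key_comp {r i : ℕ} (x : Fin r → ℂ)
    (g : ((Fin r → ℂ) ⧸ Submodule.span ℂ {x}) →ₗ[ℂ] (Fin r → ℂ))
    (hsec : ∀ j : Fin r, ∃ c : ℂ,
      g (Submodule.mkQ (Submodule.span ℂ {x}) (Pi.single j 1)) = Pi.single j 1 + c • x)
    (φ : Fin (i + 1) → Fin r) (σ : Fin i → Fin r) :
    ExteriorAlgebra.liftAlternating
      (Function.update (0 : ∀ n, (Fin r → ℂ) [⋀^Fin n]→ₗ[ℂ] ℂ) (i + 1)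
        ((Matrix.detRowAlternating).compLinearMap (LinearMap.funLeft ℂ ℂ φ)))
      (ι ℂ x * ExteriorAlgebra.map g
        (ιMulti ℂ i fun k => Submodule.mkQ (Submodule.span ℂ {x}) (Pi.single (σ k) 1)))
    = ∑ j, x j *
        ((Matrix.of fun k l => if φ l = (Fin.cons j σ : Fin (i + 1) → Fin r) k then (1 : ℚ) else 0).det : ℂ) := by
  rw [map_apply_ιMulti]
  simp only [Function.comp_def]
  rw [iotaMul_congr x i _ (fun k => Pi.single (σ k) 1) (fun k => hsec (σ k))]
  have hcons : ι ℂ x * ιMulti ℂ i (fun k => Pi.single (σ k) (1 : ℂ))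
      = ιMulti ℂ (i + 1) (Fin.cons x fun k => Pi.single (σ k) 1) := by
    rw [ExteriorAlgebra.ιMulti_succ_apply]
    simp [Matrix.vecTail, Function.comp_def]
  rw [hcons, liftAlternating_apply_ιMulti, Function.update_self]
  set w : Fin i → (Fin r → ℂ) := fun k => Pi.single (σ k) 1 with hw
  set D := (Matrix.detRowAlternating (R := ℂ) (n := Fin (i + 1))).compLinearMap
    (LinearMap.funLeft ℂ ℂ φ) with hD
  have hxsum : x = ∑ j, x j • (Pi.single j 1 : Fin r → ℂ) := by
    ext l
    simp [Pi.single_apply]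
  calc D (Fin.cons x w)
      = D (Function.update (Fin.cons x w) 0 (∑ j, x j • (Pi.single j 1 : Fin r → ℂ))) := by
        rw [← hxsum, Fin.update_cons_zero]
    _ = ∑ j, D (Function.update (Fin.cons x w) 0 (x j • (Pi.single j 1 : Fin r → ℂ))) :=
        D.map_update_sum _ 0 _ _
    _ = ∑ j, x j • D (Function.update (Fin.cons x w) 0 (Pi.single j 1 : Fin r → ℂ)) := by
        simp only [AlternatingMap.map_update_smul]
    _ = ∑ j, x j *
        ((Matrix.of fun k l => if φ l = (Fin.cons j σ : Fin (i + 1) → Fin r) k then (1 : ℚ) else 0).det : ℂ) := by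
        refine Finset.sum_congr rfl fun j _ => ?_
        rw [Fin.update_cons_zero, smul_eq_mul]
        congr 1
        have hmapdet := RingHom.map_det (algebraMap ℚ ℂ)
          (Matrix.of fun k l => if φ l = (Fin.cons j σ : Fin (i + 1) → Fin r) k then (1 : ℚ) else 0)
        rw [eq_ratCast] at hmapdet
        rw [hmapdet]
        show Matrix.det (Matrix.of fun k l =>
          (Fin.cons (Pi.single j 1 : Fin r → ℂ) w : Fin (i + 1) → Fin r → ℂ) k (φ l)) = _
        congr 1
        ext k l
        refine Fin.cases ?_ (fun k' => ?_) k
        · simp [Pi.single_apply, apply_ite (algebraMap ℚ ℂ)]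
        · simp [hw, Pi.single_apply, apply_ite (algebraMap ℚ ℂ)]

/-- if `x₁,…,x_r ∈ ℂ` are `ℚ`-linearly independent, then for `0 ≤ i ≤ r−1`
the wedges `π(e_{j₁}) ∧ ⋯ ∧ π(e_{jᵢ})` (over subsets `{j₁<⋯<jᵢ}` of `{1,…,r}`) of the
images of the standard basis vectors in `ℂ^r/ℂ·x` are `ℚ`-linearly independent in
`⋀ⁱ(ℂ^r/ℂ·x)`. -/
theorem statement14 (r : ℕ) (hr : 2 ≤ r) (x : Fin r → ℂ)
    (hx : LinearIndependent ℚ x) :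
    ∀ i : ℕ, i ≤ r - 1 →
      LinearIndependent ℚ
        (fun s : {s : Finset (Fin r) // s.card = i} =>
          (ExteriorAlgebra.ιMulti_family ℂ i
            (fun j : Fin r =>
              Submodule.mkQ (Submodule.span ℂ {x}) (Pi.single j 1)) s :
            ExteriorAlgebra ℂ ((Fin r → ℂ) ⧸ Submodule.span ℂ {x}))) := by
  classical
  intro i hi
  rw [Fintype.linearIndependent_iff]
  intro q hq S₀
  -- find an element not in S₀
  have hcard : S₀.val.card < r := by
    have := S₀.2
    omega
  have hcompl : (S₀.valᶜ : Finset (Fin r)).Nonempty := by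
    rw [← Finset.card_pos, Finset.card_compl]
    simp only [Fintype.card_fin]
    omega
  obtain ⟨j₀, hj₀⟩ := hcompl
  have hj₀' : j₀ ∉ S₀.val := Finset.mem_compl.mp hj₀
  set U : Finset (Fin r) := insert j₀ S₀.val with hUdef
  have hU : U.card = i + 1 := by
    rw [hUdef, Finset.card_insert_of_notMem hj₀', S₀.2]
  set φ : Fin (i + 1) → Fin r := fun l => ((U.orderIsoOfFin hU) l : Fin r) with hφdef
  have hφinj : Function.Injective φ := fun a b hab => by
    have : (U.orderIsoOfFin hU) a = (U.orderIsoOfFin hU) b := Subtype.ext hab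
    exact (U.orderIsoOfFin hU).injective this
  have hφmem : ∀ l, φ l ∈ U := fun l => ((U.orderIsoOfFin hU) l).2
  have hφsurj : ∀ u ∈ U, ∃ l, φ l = u := by
    intro u hu
    exact ⟨(U.orderIsoOfFin hU).symm ⟨u, hu⟩,
      congrArg Subtype.val ((U.orderIsoOfFin hU).apply_symm_apply ⟨u, hu⟩)⟩
  -- section of the quotient map
  obtain ⟨g, hg⟩ := (Submodule.span ℂ {x}).mkQ.exists_rightInverse_of_surjective
    (by rw [Submodule.range_mkQ])
  have hsec : ∀ j : Fin r, ∃ c : ℂ,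
      g (Submodule.mkQ (Submodule.span ℂ {x}) (Pi.single j 1)) = Pi.single j 1 + c • x := by
    intro j
    have h1 := LinearMap.congr_fun hg (Submodule.mkQ (Submodule.span ℂ {x}) (Pi.single j 1))
    have h2 : g (Submodule.mkQ (Submodule.span ℂ {x}) (Pi.single j 1)) - Pi.single j 1
        ∈ Submodule.span ℂ {x} := by
      rw [← Submodule.Quotient.mk_eq_zero]
      have : Submodule.Quotient.mk (p := Submodule.span ℂ {x})
          (g (Submodule.mkQ (Submodule.span ℂ {x}) (Pi.single j 1)) - Pi.single j 1)
          = Submodule.mkQ (Submodule.span ℂ {x})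
            (g (Submodule.mkQ (Submodule.span ℂ {x}) (Pi.single j 1)) - Pi.single j 1) := rfl
      rw [this, map_sub]
      simpa using congrArg (· - Submodule.mkQ (Submodule.span ℂ {x}) (Pi.single j 1)) h1
    obtain ⟨c, hc⟩ := Submodule.mem_span_singleton.mp h2
    exact ⟨c, by rw [hc]; abel⟩
  -- notation for the ordered enumeration of a subset S
  set σS : {s : Finset (Fin r) // s.card = i} → Fin i → Fin r :=
    fun S k => ((S.val.orderIsoOfFin S.2) k : Fin r) with hσSdef
  have hσSinj : ∀ S, Function.Injective (σS S) := fun S a b hab => by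
    have : (S.val.orderIsoOfFin S.2) a = (S.val.orderIsoOfFin S.2) b := Subtype.ext hab
    exact (S.val.orderIsoOfFin S.2).injective this
  have hσSmem : ∀ S k, σS S k ∈ S.val := fun S k => ((S.val.orderIsoOfFin S.2) k).2
  have hσSsurj : ∀ S, ∀ m ∈ S.val, ∃ k, σS S k = m := by
    intro S m hm
    exact ⟨(S.val.orderIsoOfFin S.2).symm ⟨m, hm⟩,
      congrArg Subtype.val ((S.val.orderIsoOfFin S.2).apply_symm_apply ⟨m, hm⟩)⟩
  -- the rational determinants
  set dQ : {s : Finset (Fin r) // s.card = i} → Fin r → ℚ :=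
    fun S j => (Matrix.of fun k l => if φ l = (Fin.cons j (σS S) : Fin (i + 1) → Fin r) k then (1 : ℚ) else 0).det
    with hdQdef
  -- the coefficient functional
  set F : ExteriorAlgebra ℂ (Fin r → ℂ) →ₗ[ℂ] ℂ :=
    ExteriorAlgebra.liftAlternating
      (Function.update (0 : ∀ n, (Fin r → ℂ) [⋀^Fin n]→ₗ[ℂ] ℂ) (i + 1)
        ((Matrix.detRowAlternating).compLinearMap (LinearMap.funLeft ℂ ℂ φ))) with hF
  -- rewrite the hypothesis with complex scalars
  simp only [ratSMul_def] at hq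
  have h2 := congrArg (fun z => F (ExteriorAlgebra.ι ℂ x * (ExteriorAlgebra.map g z))) hq
  simp only [map_sum, map_smul, Finset.mul_sum, mul_smul_comm, map_zero, mul_zero] at h2
  have hWval : ∀ S : {s : Finset (Fin r) // s.card = i},
      F (ExteriorAlgebra.ι ℂ x * (ExteriorAlgebra.map g
        (ExteriorAlgebra.ιMulti_family ℂ i
          (fun j : Fin r => Submodule.mkQ (Submodule.span ℂ {x}) (Pi.single j 1)) S)))
      = ∑ j, x j * (dQ S j : ℂ) := by
    intro S
    exact key_comp x g hsec φ (σS S)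
  simp only [hWval] at h2
  -- reorganize into a rational linear relation among the `x j`
  set c : Fin r → ℚ := fun j => ∑ S, q S * dQ S j with hc
  have hcx : ∑ j, (c j : ℂ) * x j = 0 := by
    calc ∑ j, (c j : ℂ) * x j
        = ∑ j, ∑ S, (q S : ℂ) • (x j * (dQ S j : ℂ)) := by
          refine Finset.sum_congr rfl fun j _ => ?_
          rw [hc]
          push_cast
          rw [Finset.sum_mul]
          refine Finset.sum_congr rfl fun S _ => ?_
          rw [smul_eq_mul]
          ring
      _ = ∑ S, ∑ j, (q S : ℂ) • (x j * (dQ S j : ℂ)) := Finset.sum_comm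
      _ = ∑ S, (q S : ℂ) • ∑ j, x j * (dQ S j : ℂ) := by
          refine Finset.sum_congr rfl fun S _ => ?_
          rw [Finset.smul_sum]
      _ = 0 := h2
  have hcj : ∀ j, c j = 0 := by
    have hx' := Fintype.linearIndependent_iff.mp hx c ?_
    · exact hx'
    · refine (Finset.sum_congr rfl fun j _ => ?_).trans hcx
      exact ratSMul_def (c j) (x j)
  -- now compute c j₀
  have hzero : ∀ S : {s : Finset (Fin r) // s.card = i}, S ≠ S₀ → dQ S j₀ = 0 := by
    intro S hS
    by_cases hsub : S.val ⊆ U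
    · by_cases hj₀S : j₀ ∈ S.val
      · -- repeated rows 0 and k₀.succ
        obtain ⟨k₀, hk₀⟩ := hσSsurj S j₀ hj₀S
        refine Matrix.det_zero_of_row_eq (Fin.succ_ne_zero k₀).symm ?_
        funext l
        simp [Fin.cons_succ, Fin.cons_zero, hk₀]
      · -- S ⊆ U \ {j₀} = S₀, same cardinality, so S = S₀, contradiction
        exfalso
        apply hS
        apply Subtype.ext
        apply Finset.eq_of_subset_of_card_le
        · intro m hm
          have hmU : m ∈ U := hsub hm
          rw [hUdef, Finset.mem_insert] at hmU
          rcases hmU with h | h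
          · exact absurd (h ▸ hm) hj₀S
          · exact h
        · rw [S₀.2, S.2]
    · -- a zero row
      rw [Finset.not_subset] at hsub
      obtain ⟨m, hmS, hmU⟩ := hsub
      obtain ⟨k₁, hk₁⟩ := hσSsurj S m hmS
      refine Matrix.det_eq_zero_of_row_eq_zero k₁.succ ?_
      intro l
      simp only [Matrix.of_apply, Fin.cons_succ, hk₁]
      rw [if_neg]
      intro h
      exact hmU (h ▸ hφmem l)
  have hne : dQ S₀ j₀ ≠ 0 := by
    apply det_indicator_ne_zero φ (Fin.cons j₀ (σS S₀)) hφinj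
    · -- injectivity of Fin.cons j₀ (σS S₀)
      intro a b hab
      rcases Fin.eq_zero_or_eq_succ a with rfl | ⟨a', rfl⟩ <;>
        rcases Fin.eq_zero_or_eq_succ b with rfl | ⟨b', rfl⟩
      · rfl
      · exfalso
        simp only [Fin.cons_zero, Fin.cons_succ] at hab
        have hmem := hσSmem S₀ b'
        rw [← hab] at hmem
        exact hj₀' hmem
      · exfalso
        simp only [Fin.cons_zero, Fin.cons_succ] at hab
        have hmem := hσSmem S₀ a'
        rw [hab] at hmem
        exact hj₀' hmem
      · simp only [Fin.cons_succ] at hab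
        exact congrArg Fin.succ (hσSinj S₀ hab)
    · -- range condition
      intro k
      refine Fin.cases ?_ (fun k' => ?_) k
      · exact hφsurj j₀ (by rw [hUdef]; exact Finset.mem_insert_self _ _)
      · refine hφsurj (σS S₀ k') ?_
        rw [hUdef]
        exact Finset.mem_insert_of_mem (hσSmem S₀ k')
  have hcj₀ : c j₀ = q S₀ * dQ S₀ j₀ := by
    rw [hc]
    refine Finset.sum_eq_single S₀ (fun S _ hS => by rw [hzero S hS, mul_zero]) ?_
    intro h
    exact absurd (Finset.mem_univ _) h
  have := hcj j₀
  rw [hcj₀] at this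
  exact (mul_eq_zero.mp this).resolve_right hne

end EGG14
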